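/- Let n ≥ 1 and let f : ℝⁿ → ℝ be symmetric and concave. Then the induced spectral function F on the real vector space of n×n real symmetric matrices, defined by F(A) = f(λ(A)), is concave: for all real symmetric n×n matrices A, B and all t ∈ [0,1], F(tA + (1−t)B) ≥ t F(A) + (1−t) F(B). -/

import Mathlib

open Matrix Finset

/-- Key lemma (Schur concavity step): if `V` is orthogonal, then the value of a symmetric
concave `f` at the diagonal of `V * diagonal lam * Vᵀ` is at least `f lam`. -/
lemma spectral_key_aux {n : ℕ} (f : (Fin n → ℝ) → ℝ)
    (hsym : ∀ (σ : Equiv.Perm (Fin n)) (x : Fin n → ℝ), f (x ∘ σ) = f x)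
    (hconc : ConcaveOn ℝ Set.univ f)
    (lam : Fin n → ℝ) (V : Matrix (Fin n) (Fin n) ℝ)
    (hV : V ∈ Matrix.unitaryGroup (Fin n) ℝ) :
    f lam ≤ f (fun i => (V * Matrix.diagonal lam * star V) i i) := by
  classical
  set S : Matrix (Fin n) (Fin n) ℝ := Matrix.of (fun i j => (V i j) ^ 2) with hSdef
  have hVV : V * star V = 1 := (Matrix.mem_unitaryGroup_iff).mp hV
  have hVV' : star V * V = 1 := (Matrix.mem_unitaryGroup_iff').mp hV
  have hS : S ∈ doublyStochastic ℝ (Fin n) := by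
    rw [mem_doublyStochastic_iff_sum]
    refine ⟨fun i j => sq_nonneg _, fun i => ?_, fun j => ?_⟩
    · have := congrArg (fun M => M i i) hVV
      simpa [Matrix.mul_apply, Matrix.star_apply, sq, hSdef] using this
    · have := congrArg (fun M => M j j) hVV'
      simpa [Matrix.mul_apply, Matrix.star_apply, sq, hSdef, mul_comm] using this
  obtain ⟨w, hw0, hw1, hwS⟩ := exists_eq_sum_perm_of_mem_doublyStochastic hS
  have hd : (fun i => (V * Matrix.diagonal lam * star V) i i)
      = ∑ σ : Equiv.Perm (Fin n), w σ • (lam ∘ σ) := by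
    funext i
    have hSi : ∀ j, S i j = ∑ σ : Equiv.Perm (Fin n), w σ * (σ.permMatrix ℝ) i j := by
      intro j
      rw [← hwS]
      simp [Matrix.sum_apply]
    have hdiag : (V * Matrix.diagonal lam * star V) i i = ∑ j, S i j * lam j := by
      simp [Matrix.mul_apply, Matrix.star_apply, Matrix.diagonal, hSdef, sq,
        Finset.sum_mul, mul_comm, mul_assoc, mul_left_comm]
    rw [hdiag]
    simp only [hSi, Finset.sum_mul, Finset.sum_apply, Pi.smul_apply, Function.comp_apply,
      smul_eq_mul]
    rw [Finset.sum_comm]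
    apply Finset.sum_congr rfl
    intro σ _
    rw [Finset.sum_eq_single (σ i)]
    · simp [Equiv.Perm.permMatrix, PEquiv.toMatrix_apply, Equiv.toPEquiv]
    · intro b _ hb
      simp [Equiv.Perm.permMatrix, PEquiv.toMatrix_apply, Equiv.toPEquiv, Ne.symm hb]
    · simp
  rw [hd]
  calc f lam = ∑ σ : Equiv.Perm (Fin n), w σ • f (lam ∘ σ) := by
        simp only [hsym, smul_eq_mul, ← Finset.sum_mul, hw1, one_mul]
    _ ≤ f (∑ σ : Equiv.Perm (Fin n), w σ • (lam ∘ σ)) :=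
        hconc.le_map_sum (fun σ _ => hw0 σ) (by simpa using hw1) (fun σ _ => Set.mem_univ _)

/-- For a Hermitian real matrix `A` and orthogonal `U`, `f` of the diagonal of `star U * A * U`
dominates `f` of the eigenvalues of `A`. -/
lemma spectral_key {n : ℕ} (f : (Fin n → ℝ) → ℝ)
    (hsym : ∀ (σ : Equiv.Perm (Fin n)) (x : Fin n → ℝ), f (x ∘ σ) = f x)
    (hconc : ConcaveOn ℝ Set.univ f)
    (A : Matrix (Fin n) (Fin n) ℝ) (hA : A.IsHermitian)
    (U : Matrix (Fin n) (Fin n) ℝ) (hU : U ∈ Matrix.unitaryGroup (Fin n) ℝ) :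
    f hA.eigenvalues ≤ f (fun i => (star U * A * U) i i) := by
  classical
  set V : Matrix (Fin n) (Fin n) ℝ := star U * (hA.eigenvectorUnitary : Matrix (Fin n) (Fin n) ℝ)
    with hVdef
  have hVmem : V ∈ Matrix.unitaryGroup (Fin n) ℝ :=
    mul_mem (Unitary.star_mem hU) (hA.eigenvectorUnitary).2
  have hco : (Matrix.diagonal (RCLike.ofReal ∘ hA.eigenvalues) : Matrix (Fin n) (Fin n) ℝ)
      = Matrix.diagonal hA.eigenvalues := by
    funext i j
    simp [Matrix.diagonal]
  have hAeq : star U * A * U = V * Matrix.diagonal hA.eigenvalues * star V := by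
    rw [hVdef, Matrix.star_mul, star_star]
    conv_lhs => rw [hA.spectral_theorem, Unitary.conjStarAlgAut_apply]
    rw [hco]
    simp only [Matrix.mul_assoc]
  rw [hAeq]
  exact spectral_key_aux f hsym hconc hA.eigenvalues V hVmem

/-- If `f : ℝⁿ → ℝ` (n ≥ 1) is symmetric and concave, then the induced
spectral function `F(A) = f(λ(A))` on real symmetric `n × n` matrices is concave. -/
theorem spectral_function_concave (n : ℕ) (hn : 1 ≤ n) (f : (Fin n → ℝ) → ℝ)
    (hsym : ∀ (σ : Equiv.Perm (Fin n)) (x : Fin n → ℝ), f (x ∘ σ) = f x)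
    (hconc : ConcaveOn ℝ Set.univ f)
    (A B : Matrix (Fin n) (Fin n) ℝ)
    (hA : A.IsHermitian) (hB : B.IsHermitian)
    (t : ℝ) (ht0 : 0 ≤ t) (ht1 : t ≤ 1)
    (hC : (t • A + (1 - t) • B).IsHermitian) :
    t * f hA.eigenvalues + (1 - t) * f hB.eigenvalues ≤ f hC.eigenvalues := by
  classical
  set U : Matrix (Fin n) (Fin n) ℝ := (hC.eigenvectorUnitary : Matrix (Fin n) (Fin n) ℝ)
    with hUdef
  have hUmem : U ∈ Matrix.unitaryGroup (Fin n) ℝ := (hC.eigenvectorUnitary).2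
  set dA : Fin n → ℝ := fun i => (star U * A * U) i i with hdA
  set dB : Fin n → ℝ := fun i => (star U * B * U) i i with hdB
  have hCd : hC.eigenvalues = t • dA + (1 - t) • dB := by
    have hdiag : star (hC.eigenvectorUnitary : Matrix (Fin n) (Fin n) ℝ) * (t • A + (1 - t) • B)
        * (hC.eigenvectorUnitary : Matrix (Fin n) (Fin n) ℝ)
        = Matrix.diagonal (RCLike.ofReal ∘ hC.eigenvalues) := by
      rw [← Unitary.conjStarAlgAut_star_apply (S := ℝ)]
      exact hC.conjStarAlgAut_star_eigenvectorUnitary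
    funext i
    have h1 : (star U * (t • A + (1 - t) • B) * U) i i = hC.eigenvalues i := by
      rw [hUdef, hdiag]
      simp
    have h2 : (star U * (t • A + (1 - t) • B) * U) i i = t * dA i + (1 - t) * dB i := by
      rw [hdA, hdB]
      simp [Matrix.mul_add, Matrix.add_mul, Matrix.mul_smul, Matrix.smul_mul]
    simp only [Pi.add_apply, Pi.smul_apply, smul_eq_mul]
    rw [← h1, h2]
  have hfA : f hA.eigenvalues ≤ f dA := spectral_key f hsym hconc A hA U hUmem
  have hfB : f hB.eigenvalues ≤ f dB := spectral_key f hsym hconc B hB U hUmem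
  have hjen : t • f dA + (1 - t) • f dB ≤ f (t • dA + (1 - t) • dB) :=
    hconc.2 (Set.mem_univ dA) (Set.mem_univ dB) ht0 (by linarith) (by ring)
  rw [hCd]
  have h1 : t * f hA.eigenvalues ≤ t * f dA := mul_le_mul_of_nonneg_left hfA ht0
  have h2 : (1 - t) * f hB.eigenvalues ≤ (1 - t) * f dB :=
    mul_le_mul_of_nonneg_left hfB (by linarith)
  calc t * f hA.eigenvalues + (1 - t) * f hB.eigenvalues
      ≤ t * f dA + (1 - t) * f dB := by linarith
    _ ≤ f (t • dA + (1 - t) • dB) := by simpa [smul_eq_mul] using hjen
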